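/- For the Potts partition functions one has the internal energy of K_{3,3}: U_{K_{3,3}}^q(β) = (3q/(2·Z_{K_{3,3}}))·[λ³(λ³+q−1)² + λ(q−1)(q−2)(3λ+q−3)² + (q−1)(2λ²+λ)(λ²+λ+q−2)²], where λ = e^{−β} and Z_{K_{3,3}} = q(λ³+q−1)³ + 3q(q−1)(λ²+λ+q−2)³ + q(q−1)(q−2)(3λ+q−3)³. -/

import Mathlib

open scoped Classical
open Finset

/-- Number of monochromatic edges of `G` under the coloring `σ`. -/
noncomputable def monoEdges {V : Type} [Fintype V] (G : SimpleGraph V) {q : ℕ}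
    (σ : V → Fin q) : ℕ :=
  (G.edgeFinset.filter fun e =>
    Sym2.lift ⟨fun u v => σ u = σ v, fun _ _ => propext eq_comm⟩ e).card

/-- The `q`-color Potts partition function of `G` at inverse temperature `β`. -/
noncomputable def pottsZ {V : Type} [Fintype V] (G : SimpleGraph V) (q : ℕ) (β : ℝ) : ℝ :=
  ∑ σ : V → Fin q, Real.exp (-β * monoEdges G σ)

/-- The internal energy per particle: expected number of monochromatic
edges per vertex in the Potts model. -/
noncomputable def pottsU {V : Type} [Fintype V] (G : SimpleGraph V) (q : ℕ) (β : ℝ) : ℝ :=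
  (Fintype.card V : ℝ)⁻¹ *
    (∑ σ : V → Fin q, (monoEdges G σ : ℝ) * Real.exp (-β * monoEdges G σ)) / pottsZ G q β

/-- The number of proper `q`-colorings of `G`. -/
noncomputable def properCount {V : Type} [Fintype V] (G : SimpleGraph V) (q : ℕ) : ℕ :=
  (Finset.univ.filter fun σ : V → Fin q => monoEdges G σ = 0).card

lemma edgeFinset_K33 :
    (completeBipartiteGraph (Fin 3) (Fin 3)).edgeFinset
      = (Finset.univ : Finset (Fin 3 × Fin 3)).image
          (fun p => Sym2.mk (Sum.inl p.1) (Sum.inr p.2)) := by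
  ext e
  induction e using Sym2.ind with
  | _ u v =>
    rw [SimpleGraph.mem_edgeFinset]
    simp only [SimpleGraph.mem_edgeFinset, SimpleGraph.mem_edgeSet, completeBipartiteGraph,
      Finset.mem_image, Finset.mem_univ, true_and, Sym2.eq, Sym2.rel_iff']
    rcases u with u | u <;> rcases v with v | v <;>
      simp [Prod.ext_iff, eq_comm, or_comm]

lemma mono33 (q : ℕ) (σ : Fin 3 ⊕ Fin 3 → Fin q) :
    monoEdges (completeBipartiteGraph (Fin 3) (Fin 3)) σ
      = ∑ i : Fin 3, ∑ j : Fin 3, if σ (Sum.inl i) = σ (Sum.inr j) then 1 else 0 := by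
  classical
  rw [monoEdges, Finset.card_filter, edgeFinset_K33, Finset.sum_image ?hinj]
  · rw [Fintype.sum_prod_type]
    refine Finset.sum_congr rfl fun i _ => Finset.sum_congr rfl fun j _ => ?_
    simp only [Sym2.lift_mk]
    congr 1
  · intro p _ p' _ h
    simp only [Sym2.eq, Sym2.rel_iff', Prod.mk.injEq, Prod.swap_prod_mk, Sum.inl.injEq,
      Sum.inr.injEq, reduceCtorEq, false_and, and_false, or_false] at h
    exact Prod.ext h.1 h.2

section helpers
variable {q : ℕ}

lemma sum_ite_one (c : Fin q) (A B : ℝ) :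
    ∑ x : Fin q, (if x = c then A else B) = A + ((q : ℝ) - 1) * B := by
  have h : ∀ x : Fin q, (if x = c then A else B) = B + (if x = c then A - B else 0) := by
    intro x; by_cases h : x = c <;> simp [h]
  rw [Finset.sum_congr rfl fun x _ => h x, Finset.sum_add_distrib, Finset.sum_const,
    Finset.sum_ite_eq' Finset.univ c fun _ => A - B]
  simp [Finset.card_univ, nsmul_eq_mul]
  ring

lemma sum_ite_pair (c c' : Fin q) (h : c ≠ c') (A A' B : ℝ) :
    ∑ x : Fin q, (if x = c then A else if x = c' then A' else B)
      = A + A' + ((q : ℝ) - 2) * B := by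
  have hp : ∀ x : Fin q, (if x = c then A else if x = c' then A' else B)
      = B + (if x = c then A - B else 0) + (if x = c' then A' - B else 0) := by
    intro x
    by_cases h1 : x = c
    · subst h1; simp [h]
    · by_cases h2 : x = c'
      · subst h2; rw [if_neg (Ne.symm h)]; simp [h1]
      · simp [h1, h2]
  rw [Finset.sum_congr rfl fun x _ => hp x]
  rw [Finset.sum_add_distrib, Finset.sum_add_distrib, Finset.sum_const,
    Finset.sum_ite_eq' Finset.univ c fun _ => A - B,
    Finset.sum_ite_eq' Finset.univ c' fun _ => A' - B]
  simp [Finset.card_univ, nsmul_eq_mul]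
  ring

lemma sum_ite_triple (c c' c'' : Fin q) (h : c ≠ c') (h' : c ≠ c'') (h'' : c' ≠ c'')
    (A A' A'' B : ℝ) :
    ∑ x : Fin q, (if x = c then A else if x = c' then A' else if x = c'' then A'' else B)
      = A + A' + A'' + ((q : ℝ) - 3) * B := by
  have hp : ∀ x : Fin q, (if x = c then A else if x = c' then A' else if x = c'' then A'' else B)
      = B + (if x = c then A - B else 0) + (if x = c' then A' - B else 0)
          + (if x = c'' then A'' - B else 0) := by
    intro x
    by_cases h1 : x = c
    · subst h1; simp [h, h']
    · by_cases h2 : x = c'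
      · subst h2; simp [h1, h'']
      · by_cases h3 : x = c''
        · subst h3; rw [if_neg (Ne.symm h'), if_neg (Ne.symm h'')]; simp [h1, h2]
        · simp [h1, h2, h3]
  rw [Finset.sum_congr rfl fun x _ => hp x]
  rw [Finset.sum_add_distrib, Finset.sum_add_distrib, Finset.sum_add_distrib, Finset.sum_const,
    Finset.sum_ite_eq' Finset.univ c fun _ => A - B,
    Finset.sum_ite_eq' Finset.univ c' fun _ => A' - B,
    Finset.sum_ite_eq' Finset.univ c'' fun _ => A'' - B]
  simp [Finset.card_univ, nsmul_eq_mul]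
  ring

lemma trip_sum (u v w : Fin q → ℝ) :
    ∑ y1 : Fin q, ∑ y2 : Fin q, ∑ y3 : Fin q, u y1 * v y2 * w y3
      = (∑ d, u d) * (∑ d, v d) * (∑ d, w d) := by
  have h3 : ∀ y1 y2 : Fin q, ∑ y3 : Fin q, u y1 * v y2 * w y3
      = u y1 * v y2 * ∑ d, w d := fun y1 y2 => by rw [Finset.mul_sum]
  have h2 : ∀ y1 : Fin q, ∑ y2 : Fin q, u y1 * v y2 * (∑ d, w d)
      = u y1 * (∑ d, v d) * (∑ d, w d) := by
    intro y1
    rw [← Finset.sum_mul, ← Finset.mul_sum]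
  simp only [h3, h2]
  rw [← Finset.sum_mul, ← Finset.sum_mul]

lemma triple_sum (c F : Fin q → ℝ) :
    ∑ y1 : Fin q, ∑ y2 : Fin q, ∑ y3 : Fin q,
        ((c y1 + c y2 + c y3) * (F y1 * F y2 * F y3))
      = 3 * ((∑ d, c d * F d) * (∑ d, F d) ^ 2) := by
  have hpt : ∀ y1 y2 y3 : Fin q,
      (c y1 + c y2 + c y3) * (F y1 * F y2 * F y3)
        = (fun d => c d * F d) y1 * F y2 * F y3 + F y1 * ((fun d => c d * F d) y2) * F y3
            + F y1 * F y2 * ((fun d => c d * F d) y3) := by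
    intros; ring
  simp only [hpt, Finset.sum_add_distrib]
  rw [trip_sum, trip_sum, trip_sum]
  ring

end helpers

def cnt3 {q : ℕ} (x1 x2 x3 d : Fin q) : ℕ :=
  (if x1 = d then 1 else 0) + (if x2 = d then 1 else 0) + (if x3 = d then 1 else 0)

section ST
variable {q : ℕ} (lam : ℝ)

lemma S_all (x : Fin q) : ∑ d, lam ^ cnt3 x x x d = lam ^ 3 + ((q : ℝ) - 1) := by
  have hpt : ∀ d : Fin q, lam ^ cnt3 x x x d = if d = x then lam ^ 3 else 1 := by
    intro d; by_cases h : x = d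
    · simp [cnt3, h]
    · simp [cnt3, h, Ne.symm h]
  rw [Finset.sum_congr rfl fun d _ => hpt d, sum_ite_one]
  ring

lemma T_all (x : Fin q) :
    ∑ d, (cnt3 x x x d : ℝ) * lam ^ cnt3 x x x d = 3 * lam ^ 3 := by
  have hpt : ∀ d : Fin q, (cnt3 x x x d : ℝ) * lam ^ cnt3 x x x d
      = if d = x then 3 * lam ^ 3 else 0 := by
    intro d; by_cases h : x = d
    · norm_num [cnt3, h]
    · simp [cnt3, h, Ne.symm h]
  rw [Finset.sum_congr rfl fun d _ => hpt d, sum_ite_one]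
  ring

lemma S_two (x z : Fin q) (h : x ≠ z) :
    ∑ d, lam ^ cnt3 x x z d = lam ^ 2 + lam + ((q : ℝ) - 2) := by
  have hpt : ∀ d : Fin q, lam ^ cnt3 x x z d
      = if d = x then lam ^ 2 else if d = z then lam else 1 := by
    intro d
    by_cases h1 : x = d
    · by_cases h2 : z = d
      · exact absurd (h1.trans h2.symm) h
      · norm_num [cnt3, h1, h2, Ne.symm h2]
    · by_cases h2 : z = d
      · norm_num [cnt3, h1, Ne.symm h1, h2]
      · simp [cnt3, h1, h2, Ne.symm h1, Ne.symm h2]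
  rw [Finset.sum_congr rfl fun d _ => hpt d, sum_ite_pair x z h]
  ring

lemma T_two (x z : Fin q) (h : x ≠ z) :
    ∑ d, (cnt3 x x z d : ℝ) * lam ^ cnt3 x x z d = 2 * lam ^ 2 + lam := by
  have hpt : ∀ d : Fin q, (cnt3 x x z d : ℝ) * lam ^ cnt3 x x z d
      = if d = x then 2 * lam ^ 2 else if d = z then lam else 0 := by
    intro d
    by_cases h1 : x = d
    · by_cases h2 : z = d
      · exact absurd (h1.trans h2.symm) h
      · norm_num [cnt3, h1, h2, Ne.symm h2]
    · by_cases h2 : z = d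
      · norm_num [cnt3, h1, Ne.symm h1, h2]
      · simp [cnt3, h1, h2, Ne.symm h1, Ne.symm h2]
  rw [Finset.sum_congr rfl fun d _ => hpt d, sum_ite_pair x z h]
  ring

lemma S_dist (x y z : Fin q) (hxy : x ≠ y) (hxz : x ≠ z) (hyz : y ≠ z) :
    ∑ d, lam ^ cnt3 x y z d = 3 * lam + ((q : ℝ) - 3) := by
  have hpt : ∀ d : Fin q, lam ^ cnt3 x y z d
      = if d = x then lam else if d = y then lam else if d = z then lam else 1 := by
    intro d
    by_cases h1 : x = d
    · by_cases h2 : y = d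
      · exact absurd (h1.trans h2.symm) hxy
      · by_cases h3 : z = d
        · exact absurd (h1.trans h3.symm) hxz
        · norm_num [cnt3, h1, h2, h3, Ne.symm h2, Ne.symm h3]
    · by_cases h2 : y = d
      · by_cases h3 : z = d
        · exact absurd (h2.trans h3.symm) hyz
        · norm_num [cnt3, h1, h2, h3, Ne.symm h1, Ne.symm h3]
      · by_cases h3 : z = d
        · norm_num [cnt3, h1, h2, h3, Ne.symm h1, Ne.symm h2]
        · simp [cnt3, h1, h2, h3, Ne.symm h1, Ne.symm h2, Ne.symm h3]
  rw [Finset.sum_congr rfl fun d _ => hpt d, sum_ite_triple x y z hxy hxz hyz]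
  ring

lemma T_dist (x y z : Fin q) (hxy : x ≠ y) (hxz : x ≠ z) (hyz : y ≠ z) :
    ∑ d, (cnt3 x y z d : ℝ) * lam ^ cnt3 x y z d = 3 * lam := by
  have hpt : ∀ d : Fin q, (cnt3 x y z d : ℝ) * lam ^ cnt3 x y z d
      = if d = x then lam else if d = y then lam else if d = z then lam else 0 := by
    intro d
    by_cases h1 : x = d
    · by_cases h2 : y = d
      · exact absurd (h1.trans h2.symm) hxy
      · by_cases h3 : z = d
        · exact absurd (h1.trans h3.symm) hxz
        · norm_num [cnt3, h1, h2, h3, Ne.symm h2, Ne.symm h3]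
    · by_cases h2 : y = d
      · by_cases h3 : z = d
        · exact absurd (h2.trans h3.symm) hyz
        · norm_num [cnt3, h1, h2, h3, Ne.symm h1, Ne.symm h3]
      · by_cases h3 : z = d
        · norm_num [cnt3, h1, h2, h3, Ne.symm h1, Ne.symm h2]
        · simp [cnt3, h1, h2, h3, Ne.symm h1, Ne.symm h2, Ne.symm h3]
  rw [Finset.sum_congr rfl fun d _ => hpt d, sum_ite_triple x y z hxy hxz hyz]
  ring

lemma key_sum :
    ∑ x1 : Fin q, ∑ x2 : Fin q, ∑ x3 : Fin q,
        3 * ((∑ d, (cnt3 x1 x2 x3 d : ℝ) * lam ^ cnt3 x1 x2 x3 d)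
              * (∑ d, lam ^ cnt3 x1 x2 x3 d) ^ 2)
      = (q : ℝ) * (9 * lam ^ 3 * (lam ^ 3 + (q : ℝ) - 1) ^ 2)
          + 3 * (q : ℝ) * ((q : ℝ) - 1)
              * (3 * (2 * lam ^ 2 + lam) * (lam ^ 2 + lam + (q : ℝ) - 2) ^ 2)
          + (q : ℝ) * ((q : ℝ) - 1) * ((q : ℝ) - 2)
              * (9 * lam * (3 * lam + (q : ℝ) - 3) ^ 2) := by
  set A : ℝ := 9 * lam ^ 3 * (lam ^ 3 + (q : ℝ) - 1) ^ 2 with hA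
  set B : ℝ := 3 * (2 * lam ^ 2 + lam) * (lam ^ 2 + lam + (q : ℝ) - 2) ^ 2 with hB
  set C : ℝ := 9 * lam * (3 * lam + (q : ℝ) - 3) ^ 2 with hC
  have v_eq : ∀ x1 x2 x3 : Fin q,
      3 * ((∑ d, (cnt3 x1 x2 x3 d : ℝ) * lam ^ cnt3 x1 x2 x3 d)
            * (∑ d, lam ^ cnt3 x1 x2 x3 d) ^ 2)
        = if x2 = x1 then (if x3 = x1 then A else B)
          else (if x3 = x1 then B else if x3 = x2 then B else C) := by
    intro x1 x2 x3
    by_cases h21 : x2 = x1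
    · by_cases h31 : x3 = x1
      · simp only [h21, h31]
        rw [S_all, T_all]
        simp [hA]
        ring
      · simp only [h21]
        rw [S_two lam x1 x3 (fun hh => h31 hh.symm), T_two lam x1 x3 (fun hh => h31 hh.symm)]
        simp [h31, hB]
        ring
    · by_cases h31 : x3 = x1
      · simp only [h31]
        have hc : ∀ d, cnt3 x1 x2 x1 d = cnt3 x1 x1 x2 d := by
          intro d; simp only [cnt3]; ring
        simp only [hc]
        rw [S_two lam x1 x2 (Ne.symm h21), T_two lam x1 x2 (Ne.symm h21)]
        simp [h21, hB]
        ring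
      · by_cases h32 : x3 = x2
        · simp only [h32]
          have hc : ∀ d, cnt3 x1 x2 x2 d = cnt3 x2 x2 x1 d := by
            intro d; simp only [cnt3]; ring
          simp only [hc]
          rw [S_two lam x2 x1 h21, T_two lam x2 x1 h21]
          simp [h21, h31, hB]
          ring
        · rw [S_dist lam x1 x2 x3 (Ne.symm h21) (Ne.symm h31) (Ne.symm h32),
            T_dist lam x1 x2 x3 (Ne.symm h21) (Ne.symm h31) (Ne.symm h32)]
          simp [h21, h31, h32, hC]
          ring
  simp only [v_eq]
  have h3 : ∀ x1 x2 : Fin q,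
      (∑ x3 : Fin q, if x2 = x1 then (if x3 = x1 then A else B)
          else (if x3 = x1 then B else if x3 = x2 then B else C))
        = if x2 = x1 then A + ((q : ℝ) - 1) * B else B + B + ((q : ℝ) - 2) * C := by
    intro x1 x2
    by_cases h : x2 = x1
    · simp only [if_pos h]; exact sum_ite_one x1 A B
    · simp only [if_neg h]; exact sum_ite_pair x1 x2 (Ne.symm h) B B C
  simp only [h3]
  rw [Finset.sum_congr rfl fun x1 _ =>
    sum_ite_one x1 (A + ((q : ℝ) - 1) * B) (B + B + ((q : ℝ) - 2) * C)]
  rw [Finset.sum_const, Finset.card_univ, Fintype.card_fin, nsmul_eq_mul]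
  ring

end ST

def tripEquiv (q : ℕ) : Fin q × Fin q × Fin q ≃ (Fin 3 → Fin q) where
  toFun p := ![p.1, p.2.1, p.2.2]
  invFun f := (f 0, f 1, f 2)
  left_inv p := rfl
  right_inv f := by funext i; fin_cases i <;> rfl

def fullEquiv (q : ℕ) :
    (Fin q × Fin q × Fin q) × (Fin q × Fin q × Fin q) ≃ (Fin 3 ⊕ Fin 3 → Fin q) :=
  ((tripEquiv q).prodCongr (tripEquiv q)).trans
    (Equiv.sumArrowEquivProdArrow (Fin 3) (Fin 3) (Fin q)).symm

lemma mono_apply {q : ℕ} (x1 x2 x3 y1 y2 y3 : Fin q) :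
    monoEdges (completeBipartiteGraph (Fin 3) (Fin 3))
        (fullEquiv q ((x1, x2, x3), (y1, y2, y3)))
      = cnt3 x1 x2 x3 y1 + cnt3 x1 x2 x3 y2 + cnt3 x1 x2 x3 y3 := by
  rw [mono33, Finset.sum_comm]
  simp only [Fin.sum_univ_three, cnt3, fullEquiv, tripEquiv, Equiv.sumArrowEquivProdArrow,
    Equiv.trans_apply, Equiv.prodCongr_apply, Equiv.coe_fn_mk, Equiv.coe_fn_symm_mk,
    Prod.map_apply, Sum.elim_inl, Sum.elim_inr, Matrix.cons_val_zero, Matrix.cons_val_one,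
    Matrix.head_cons, Matrix.cons_val_two, Matrix.tail_cons]
  rfl

lemma N_eq (q : ℕ) (β : ℝ) :
    ∑ σ : Fin 3 ⊕ Fin 3 → Fin q,
        (monoEdges (completeBipartiteGraph (Fin 3) (Fin 3)) σ : ℝ)
          * Real.exp (-β * monoEdges (completeBipartiteGraph (Fin 3) (Fin 3)) σ)
      = 9 * (q : ℝ) *
          (Real.exp (-β) ^ 3 * (Real.exp (-β) ^ 3 + (q : ℝ) - 1) ^ 2 +
            Real.exp (-β) * ((q : ℝ) - 1) * ((q : ℝ) - 2) *
              (3 * Real.exp (-β) + (q : ℝ) - 3) ^ 2 +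
            ((q : ℝ) - 1) * (2 * Real.exp (-β) ^ 2 + Real.exp (-β)) *
              (Real.exp (-β) ^ 2 + Real.exp (-β) + (q : ℝ) - 2) ^ 2) := by
  classical
  set lam : ℝ := Real.exp (-β) with hlam
  have hexp : ∀ n : ℕ, Real.exp (-β * n) = lam ^ n := by
    intro n; rw [mul_comm, Real.exp_nat_mul]
  rw [← Equiv.sum_comp (fullEquiv q)
    (fun σ => (monoEdges (completeBipartiteGraph (Fin 3) (Fin 3)) σ : ℝ)
      * Real.exp (-β * monoEdges (completeBipartiteGraph (Fin 3) (Fin 3)) σ))]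
  rw [Fintype.sum_prod_type]
  have hsummand : ∀ x1 x2 x3 y1 y2 y3 : Fin q,
      ((monoEdges (completeBipartiteGraph (Fin 3) (Fin 3))
            (fullEquiv q ((x1, x2, x3), (y1, y2, y3))) : ℝ)
          * Real.exp (-β * monoEdges (completeBipartiteGraph (Fin 3) (Fin 3))
              (fullEquiv q ((x1, x2, x3), (y1, y2, y3)))))
        = ((cnt3 x1 x2 x3 y1 : ℝ) + (cnt3 x1 x2 x3 y2 : ℝ) + (cnt3 x1 x2 x3 y3 : ℝ))
            * (lam ^ cnt3 x1 x2 x3 y1 * lam ^ cnt3 x1 x2 x3 y2 * lam ^ cnt3 x1 x2 x3 y3) := by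
    intro x1 x2 x3 y1 y2 y3
    rw [mono_apply, hexp, pow_add, pow_add]
    push_cast
    ring
  have hinner : ∀ x1 x2 x3 : Fin q,
      (∑ pr : Fin q × Fin q × Fin q,
          ((monoEdges (completeBipartiteGraph (Fin 3) (Fin 3))
                (fullEquiv q ((x1, x2, x3), pr)) : ℝ)
              * Real.exp (-β * monoEdges (completeBipartiteGraph (Fin 3) (Fin 3))
                  (fullEquiv q ((x1, x2, x3), pr)))))
        = 3 * ((∑ d, (cnt3 x1 x2 x3 d : ℝ) * lam ^ cnt3 x1 x2 x3 d)
              * (∑ d, lam ^ cnt3 x1 x2 x3 d) ^ 2) := by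
    intro x1 x2 x3
    rw [Fintype.sum_prod_type, ← triple_sum (fun d => (cnt3 x1 x2 x3 d : ℝ))
      (fun d => lam ^ cnt3 x1 x2 x3 d)]
    refine Finset.sum_congr rfl fun y1 _ => ?_
    rw [Fintype.sum_prod_type]
    refine Finset.sum_congr rfl fun y2 _ => Finset.sum_congr rfl fun y3 _ => ?_
    exact hsummand x1 x2 x3 y1 y2 y3
  have houter :
      (∑ pl : Fin q × Fin q × Fin q, ∑ pr : Fin q × Fin q × Fin q,
          ((monoEdges (completeBipartiteGraph (Fin 3) (Fin 3))
                (fullEquiv q (pl, pr)) : ℝ)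
              * Real.exp (-β * monoEdges (completeBipartiteGraph (Fin 3) (Fin 3))
                  (fullEquiv q (pl, pr)))))
        = ∑ x1 : Fin q, ∑ x2 : Fin q, ∑ x3 : Fin q,
            3 * ((∑ d, (cnt3 x1 x2 x3 d : ℝ) * lam ^ cnt3 x1 x2 x3 d)
              * (∑ d, lam ^ cnt3 x1 x2 x3 d) ^ 2) := by
    rw [Fintype.sum_prod_type]
    refine Finset.sum_congr rfl fun x1 _ => ?_
    rw [Fintype.sum_prod_type]
    refine Finset.sum_congr rfl fun x2 _ => Finset.sum_congr rfl fun x3 _ => ?_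
    exact hinner x1 x2 x3
  rw [houter, key_sum]
  ring

lemma univ_eq_univ {α : Type} (i1 i2 : Fintype α) :
    @Finset.univ α i1 = @Finset.univ α i2 := by
  cases Subsingleton.elim i1 i2; rfl

lemma Z_pos (q : ℕ) (hq : 2 ≤ q) (β : ℝ) :
    0 < pottsZ (completeBipartiteGraph (Fin 3) (Fin 3)) q β := by
  have hne : Nonempty (Fin 3 ⊕ Fin 3 → Fin q) := ⟨fun _ => ⟨0, by omega⟩⟩
  refine Finset.sum_pos (fun σ _ => Real.exp_pos _) ?_
  rw [univ_eq_univ _ (Pi.instFintype)]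
  exact Finset.univ_nonempty

theorem potts_internal_energy_K33 (q : ℕ) (hq : 2 ≤ q) (β : ℝ) :
    pottsU (completeBipartiteGraph (Fin 3) (Fin 3)) q β =
      (3 * (q : ℝ) / (2 * pottsZ (completeBipartiteGraph (Fin 3) (Fin 3)) q β)) *
        (Real.exp (-β) ^ 3 * (Real.exp (-β) ^ 3 + (q : ℝ) - 1) ^ 2 +
          Real.exp (-β) * ((q : ℝ) - 1) * ((q : ℝ) - 2) *
            (3 * Real.exp (-β) + (q : ℝ) - 3) ^ 2 +
          ((q : ℝ) - 1) * (2 * Real.exp (-β) ^ 2 + Real.exp (-β)) *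
            (Real.exp (-β) ^ 2 + Real.exp (-β) + (q : ℝ) - 2) ^ 2) := by
  have hZ := Z_pos q hq β
  have hZ' : pottsZ (completeBipartiteGraph (Fin 3) (Fin 3)) q β ≠ 0 := ne_of_gt hZ
  rw [pottsU, show ((Fintype.card (Fin 3 ⊕ Fin 3) : ℝ)) = 6 by simp]
  rw [univ_eq_univ (α := (Fin 3 ⊕ Fin 3) → Fin q) _ Pi.instFintype]
  rw [N_eq q β]
  field_simp
  ring
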